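/- Let G act on an additive category A. Then the induction functor Ind : A → A^G is separable. If moreover |G| is invertible in A (meaning every morphism is uniquely divisible by |G|), then the forgetful functor ω : A^G → A is separable. -/

import Mathlib

open CategoryTheory Limits
universe v u
variable {G : Type*} [Group G] {A : Type u} [Category.{v} A]

structure GAction (G : Type*) [Group G] (A : Type u) [Category.{v} A] where
  F : G → A ⥤ A
  equiv : ∀ g, (F g).IsEquivalence
  δ : ∀ g h : G, F h ⋙ F g ≅ F (h * g)
  cocycle : ∀ (g h l : G) (X : A),
    (F g).map ((δ h l).hom.app X) ≫ (δ g (l * h)).hom.app X ≫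
      eqToHom (congrArg (fun m => (F m).obj X) (mul_assoc l h g)) =
    (δ g h).hom.app ((F l).obj X) ≫ (δ (h * g) l).hom.app X

structure EqObj (act : GAction G A) where
  obj : A
  lam : ∀ g : G, (act.F g).obj obj ≅ obj
  compat : ∀ g h : G,
    (act.F g).map (lam h).hom ≫ (lam g).hom =
      (act.δ g h).hom.app obj ≫ (lam (h * g)).hom

namespace EqObj

variable {act : GAction G A}

@[ext]
structure EqHom (X Y : EqObj act) where
  f : X.obj ⟶ Y.obj
  comm : ∀ g : G, (act.F g).map f ≫ (Y.lam g).hom = (X.lam g).hom ≫ f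

instance : Category (EqObj act) where
  Hom := EqHom
  id X := ⟨𝟙 X.obj, by intro g; simp⟩
  comp {X Y Z} u v := ⟨u.f ≫ v.f, by
    intro g
    rw [Functor.map_comp, Category.assoc, v.comm, ← Category.assoc, u.comm, Category.assoc]⟩

@[ext]
lemma hom_ext {X Y : EqObj act} {u v : X ⟶ Y} (h : u.f = v.f) : u = v := EqHom.ext h

@[simp] lemma id_f (X : EqObj act) : (𝟙 X : X ⟶ X).f = 𝟙 X.obj := rfl
@[simp] lemma comp_f {X Y Z : EqObj act} (u : X ⟶ Y) (v : Y ⟶ Z) :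
    (u ≫ v).f = u.f ≫ v.f := rfl

@[simps]
def forget (act : GAction G A) : EqObj act ⥤ A where
  obj X := X.obj
  map u := u.f

section Preadditive

variable [Preadditive A] [∀ g : G, (act.F g).Additive]

instance instAddHom (X Y : EqObj act) : Add (X ⟶ Y) :=
  ⟨fun u v => ⟨u.f + v.f, fun g => by
    simp [Preadditive.add_comp, Preadditive.comp_add, u.comm g, v.comm g]⟩⟩

instance instZeroHom (X Y : EqObj act) : Zero (X ⟶ Y) :=
  ⟨⟨0, fun g => by simp⟩⟩

instance instNegHom (X Y : EqObj act) : Neg (X ⟶ Y) :=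
  ⟨fun u => ⟨-u.f, fun g => by
    simp [Preadditive.neg_comp, Preadditive.comp_neg, u.comm g]⟩⟩

instance homAddCommGroup (X Y : EqObj act) : AddCommGroup (X ⟶ Y) where
  add := (· + ·)
  zero := 0
  neg := Neg.neg
  add_assoc := fun a b c => hom_ext (add_assoc a.f b.f c.f)
  zero_add := fun a => hom_ext (zero_add a.f)
  add_zero := fun a => hom_ext (add_zero a.f)
  nsmul := nsmulRec
  zsmul := zsmulRec
  neg_add_cancel := fun a => hom_ext (neg_add_cancel a.f)
  add_comm := fun a b => hom_ext (add_comm a.f b.f)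

instance : Preadditive (EqObj act) where
  homGroup := homAddCommGroup
  add_comp _ _ _ f f' g := hom_ext (Preadditive.add_comp _ _ _ f.f f'.f g.f)
  comp_add _ _ _ f g g' := hom_ext (Preadditive.comp_add _ _ _ f.f g.f g'.f)

@[simp] lemma add_f {X Y : EqObj act} (u v : X ⟶ Y) : (u + v).f = u.f + v.f := rfl
@[simp] lemma zero_f (X Y : EqObj act) : (0 : X ⟶ Y).f = 0 := rfl

instance : (forget act).Additive where
  map_add := rfl

end Preadditive

end EqObj

/-- A functor is *separable* if the induced transformation on hom-sets admits a natural
retraction. -/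
def CategoryTheory.Functor.Separable {C : Type*} [Category C] {B : Type*} [Category B]
    (F : C ⥤ B) : Prop :=
  ∃ Φ : ∀ X Y : C, (F.obj X ⟶ F.obj Y) → (X ⟶ Y),
    (∀ (X Y : C) (f : X ⟶ Y), Φ X Y (F.map f) = f) ∧
    (∀ (X' X Y Y' : C) (u : X' ⟶ X) (v : Y ⟶ Y') (h : F.obj X ⟶ F.obj Y),
      Φ X' Y' (F.map u ≫ h ≫ F.map v) = u ≫ Φ X Y h ≫ v)

/-- `n` is invertible in an additive category `A` if every morphism is uniquely divisible
by `n`. -/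
def NatInvertibleIn (n : ℕ) (A : Type u) [Category.{v} A] [Preadditive A] : Prop :=
  ∀ ⦃X Y : A⦄ (f : X ⟶ Y), ∃! g : X ⟶ Y, n • g = f

/-- A functor `A ⥤ A^G` *is the induction functor* if its composite with the forgetful
functor is naturally isomorphic to `X ↦ ⊕_{g ∈ G} F_g(X)`. -/
def IsInduction [Preadditive A] [HasFiniteBiproducts A] [Fintype G] (act : GAction G A)
    (Ind : A ⥤ EqObj act) : Prop :=
  ∃ iso : ∀ X : A, (EqObj.forget act).obj (Ind.obj X) ≅ ⨁ (fun g : G => (act.F g).obj X),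
    ∀ (X Y : A) (f : X ⟶ Y),
      (EqObj.forget act).map (Ind.map f) ≫ (iso Y).hom =
        (iso X).hom ≫ biproduct.map (fun g => (act.F g).map f)

set_option linter.unusedSectionVars false

namespace IndAux

variable [Preadditive A] [HasFiniteBiproducts A] [Fintype G] (act : GAction G A)
  [∀ g : G, (act.F g).Additive]

lemma objeq {g g' : G} (e : g = g') (X : A) : (act.F g).obj X = (act.F g').obj X := by rw [e]

lemma map_eqToHom_comm {g g' : G} (e : g = g') {X Y : A} (f : X ⟶ Y) :
    (act.F g).map f ≫ eqToHom (objeq act e Y) = eqToHom (objeq act e X) ≫ (act.F g').map f := by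
  subst e; simp

lemma ι_eq {X : A} {g g' : G} (e : g = g') :
    biproduct.ι (fun k : G => (act.F k).obj X) g =
      eqToHom (objeq act e X) ≫ biproduct.ι (fun k : G => (act.F k).obj X) g' := by
  subst e; simp

lemma π_eq {X : A} {g g' : G} (e : g = g') :
    biproduct.π (fun k : G => (act.F k).obj X) g =
      biproduct.π (fun k : G => (act.F k).obj X) g' ≫ eqToHom (objeq act e.symm X) := by
  subst e; simp

lemma δ_app_congr {g h h' : G} (e : h = h') (X : A) :
    (act.δ g h).hom.app X =
      eqToHom (by rw [e]) ≫ (act.δ g h').hom.app X ≫ eqToHom (by rw [e]) := by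
  subst e; simp

lemma lam_congr {Y : EqObj act} {h h' : G} (e : h = h') :
    (Y.lam h).hom = eqToHom (objeq act e Y.obj) ≫ (Y.lam h').hom := by
  subst e; simp

lemma mytotal {J : Type*} [Fintype J] (f : J → A) [HasBiproduct f] :
    ∑ j : J, biproduct.π f j ≫ biproduct.ι f j = 𝟙 (⨁ f) := by
  classical
  apply biproduct.hom_ext
  intro k
  rw [Preadditive.sum_comp]
  simp [biproduct.ι_π, comp_dite]

lemma additive_hom_ext {J : Type*} [Fintype J] (K : A ⥤ A) [K.Additive]
    (f : J → A) {Z : A} {a b : K.obj (⨁ f) ⟶ Z}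
    (h : ∀ j, K.map (biproduct.ι f j) ≫ a = K.map (biproduct.ι f j) ≫ b) : a = b := by
  have ht : (𝟙 (K.obj (⨁ f))) =
      ∑ j : J, K.map (biproduct.π f j) ≫ K.map (biproduct.ι f j) := by
    have h2 : ∑ j : J, K.map (biproduct.π f j) ≫ K.map (biproduct.ι f j) =
        K.map (∑ j : J, biproduct.π f j ≫ biproduct.ι f j) := by
      rw [K.map_sum]; simp [CategoryTheory.Functor.map_comp]
    rw [h2, mytotal, CategoryTheory.Functor.map_id]
  calc a = 𝟙 _ ≫ a := (Category.id_comp a).symm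
    _ = ∑ j : J, K.map (biproduct.π f j) ≫ (K.map (biproduct.ι f j) ≫ a) := by
        rw [ht, Preadditive.sum_comp]; simp only [Category.assoc]
    _ = ∑ j : J, K.map (biproduct.π f j) ≫ (K.map (biproduct.ι f j) ≫ b) := by
        simp only [h]
    _ = 𝟙 _ ≫ b := by rw [ht, Preadditive.sum_comp]; simp only [Category.assoc]
    _ = b := Category.id_comp b

noncomputable def lamHom (g : G) (X : A) :
    (act.F g).obj (⨁ fun k : G => (act.F k).obj X) ⟶ ⨁ fun k : G => (act.F k).obj X :=
  ∑ l : G, (act.F g).map (biproduct.π (fun k : G => (act.F k).obj X) l) ≫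
    (act.δ g l).hom.app X ≫ biproduct.ι (fun k : G => (act.F k).obj X) (l * g)

lemma ι_lamHom (g l : G) (X : A) :
    (act.F g).map (biproduct.ι (fun k : G => (act.F k).obj X) l) ≫ lamHom act g X =
      (act.δ g l).hom.app X ≫ biproduct.ι (fun k : G => (act.F k).obj X) (l * g) := by
  classical
  unfold lamHom
  rw [Preadditive.comp_sum, Finset.sum_eq_single l]
  · rw [← Category.assoc, ← CategoryTheory.Functor.map_comp, biproduct.ι_π_self, CategoryTheory.Functor.map_id,
      Category.id_comp]
  · intro m _ hm
    rw [← Category.assoc, ← CategoryTheory.Functor.map_comp, biproduct.ι_π_ne _ (Ne.symm hm),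
      CategoryTheory.Functor.map_zero, zero_comp]
  · intro hl; exact absurd (Finset.mem_univ l) hl

lemma lamHom_π (g l : G) (X : A) :
    lamHom act g X ≫ biproduct.π (fun k : G => (act.F k).obj X) (l * g) =
      (act.F g).map (biproduct.π (fun k : G => (act.F k).obj X) l) ≫
        (act.δ g l).hom.app X := by
  classical
  unfold lamHom
  rw [Preadditive.sum_comp, Finset.sum_eq_single l]
  · simp
  · intro m _ hm
    have : m * g ≠ l * g := fun h => hm (mul_right_cancel h)
    simp [biproduct.ι_π_ne _ this]
  · intro hl; exact absurd (Finset.mem_univ l) hl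

noncomputable def lamInv (g : G) (X : A) :
    (⨁ fun k : G => (act.F k).obj X) ⟶ (act.F g).obj (⨁ fun k : G => (act.F k).obj X) :=
  ∑ l : G, biproduct.π (fun k : G => (act.F k).obj X) (l * g) ≫
    (act.δ g l).inv.app X ≫ (act.F g).map (biproduct.ι (fun k : G => (act.F k).obj X) l)

lemma lamInv_mapπ (g l : G) (X : A) :
    lamInv act g X ≫ (act.F g).map (biproduct.π (fun k : G => (act.F k).obj X) l) =
      biproduct.π (fun k : G => (act.F k).obj X) (l * g) ≫ (act.δ g l).inv.app X := by
  classical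
  unfold lamInv
  rw [Preadditive.sum_comp, Finset.sum_eq_single l]
  · rw [Category.assoc, Category.assoc, ← CategoryTheory.Functor.map_comp, biproduct.ι_π_self,
      CategoryTheory.Functor.map_id]
    simp
  · intro m _ hm
    rw [Category.assoc, Category.assoc, ← CategoryTheory.Functor.map_comp, biproduct.ι_π_ne _ hm,
      CategoryTheory.Functor.map_zero, comp_zero, comp_zero]
  · intro hl; exact absurd (Finset.mem_univ l) hl

lemma lamHom_lamInv (g : G) (X : A) : lamHom act g X ≫ lamInv act g X = 𝟙 _ := by
  unfold lamInv
  rw [Preadditive.comp_sum]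
  have : ∀ l : G, lamHom act g X ≫ (biproduct.π (fun k : G => (act.F k).obj X) (l * g) ≫
      (act.δ g l).inv.app X ≫ (act.F g).map (biproduct.ι (fun k : G => (act.F k).obj X) l)) =
      (act.F g).map (biproduct.π (fun k : G => (act.F k).obj X) l ≫
        biproduct.ι (fun k : G => (act.F k).obj X) l) := by
    intro l
    conv_lhs => rw [← Category.assoc, lamHom_π]
    rw [CategoryTheory.Functor.map_comp]
    simp
  rw [Finset.sum_congr rfl (fun l _ => this l), ← CategoryTheory.Functor.map_sum, mytotal,
    CategoryTheory.Functor.map_id]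

lemma lamInv_lamHom (g : G) (X : A) : lamInv act g X ≫ lamHom act g X = 𝟙 _ := by
  unfold lamInv
  rw [Preadditive.sum_comp]
  have : ∀ l : G, (biproduct.π (fun k : G => (act.F k).obj X) (l * g) ≫
      (act.δ g l).inv.app X ≫ (act.F g).map (biproduct.ι (fun k : G => (act.F k).obj X) l)) ≫
        lamHom act g X =
      biproduct.π (fun k : G => (act.F k).obj X) (l * g) ≫
        biproduct.ι (fun k : G => (act.F k).obj X) (l * g) := by
    intro l
    rw [Category.assoc, Category.assoc, ι_lamHom, Iso.inv_hom_id_app_assoc]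
  rw [Finset.sum_congr rfl (fun l _ => this l)]
  exact (Fintype.sum_equiv (Equiv.mulRight g) _
    (fun m => biproduct.π (fun k : G => (act.F k).obj X) m ≫
      biproduct.ι (fun k : G => (act.F k).obj X) m) (fun l => rfl)).trans (mytotal _)

noncomputable def uIso (X : A) : (act.F (1 : G)).obj X ≅ X :=
  haveI := act.equiv (1 : G)
  (act.F (1 : G)).preimageIso ((act.δ (1 : G) 1).app X ≪≫ eqToIso (objeq act (mul_one (1 : G)) X))

lemma map_uIso (X : A) :
    (act.F (1 : G)).map (uIso act X).hom =
      (act.δ (1 : G) 1).hom.app X ≫ eqToHom (objeq act (mul_one (1 : G)) X) := by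
  haveI := act.equiv (1 : G)
  simp [uIso, Functor.preimageIso, Iso.app]

lemma uIso_natural {X Y : A} (f : X ⟶ Y) :
    (act.F (1 : G)).map f ≫ (uIso act Y).hom = (uIso act X).hom ≫ f := by
  haveI := act.equiv (1 : G)
  apply (act.F (1 : G)).map_injective
  rw [CategoryTheory.Functor.map_comp, CategoryTheory.Functor.map_comp, map_uIso, map_uIso]
  have hnat : (act.F (1 : G)).map ((act.F (1 : G)).map f) ≫ (act.δ (1 : G) 1).hom.app Y =
      (act.δ (1 : G) 1).hom.app X ≫ (act.F ((1 : G) * 1)).map f :=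
    (act.δ (1 : G) 1).hom.naturality f
  rw [← Category.assoc, hnat, Category.assoc, Category.assoc,
    map_eqToHom_comm act (mul_one (1 : G)) f]

lemma lam_one (Y : EqObj act) : (Y.lam 1).hom = (uIso act Y.obj).hom := by
  haveI := act.equiv (1 : G)
  apply (act.F (1 : G)).map_injective
  rw [map_uIso]
  rw [← cancel_mono ((Y.lam (1 : G)).hom), Y.compat 1 1,
    lam_congr act (mul_one (1 : G)).symm (Y := Y), Category.assoc]
  simp

lemma δ_one (k : G) (X : A) :
    (act.δ k 1).hom.app X =
      (act.F k).map (uIso act X).hom ≫ eqToHom (objeq act (one_mul k).symm X) := by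
  obtain ⟨g, rfl⟩ : ∃ g : G, k = 1 * g := ⟨k, (one_mul k).symm⟩
  have c := act.cocycle g 1 1 X
  have mu : (act.δ (1 : G) 1).hom.app X =
      (act.F (1 : G)).map (uIso act X).hom ≫ eqToHom (objeq act (mul_one (1 : G)).symm X) := by
    rw [map_uIso]; simp
  rw [mu, CategoryTheory.Functor.map_comp, eqToHom_map,
    δ_app_congr act (mul_one (1 : G)) X] at c
  simp only [Category.assoc, eqToHom_trans, eqToHom_trans_assoc, eqToHom_refl,
    Category.id_comp, Category.comp_id] at c
  have n : (act.F g).map ((act.F (1 : G)).map (uIso act X).hom) ≫ (act.δ g 1).hom.app X =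
      (act.δ g 1).hom.app ((act.F (1 : G)).obj X) ≫ (act.F ((1 : G) * g)).map (uIso act X).hom :=
    (act.δ g 1).hom.naturality (uIso act X).hom
  rw [← Category.assoc, n, Category.assoc] at c
  have := (cancel_epi ((act.δ g 1).hom.app ((act.F (1 : G)).obj X))).1 c
  rw [← this]

noncomputable def IndObj (X : A) : EqObj act where
  obj := ⨁ fun k : G => (act.F k).obj X
  lam g := ⟨lamHom act g X, lamInv act g X, lamHom_lamInv act g X, lamInv_lamHom act g X⟩
  compat g h := by
    apply additive_hom_ext (act.F h ⋙ act.F g)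
    intro l
    have hl : (act.F h ⋙ act.F g).map (biproduct.ι (fun k : G => (act.F k).obj X) l) =
        (act.F g).map ((act.F h).map (biproduct.ι (fun k : G => (act.F k).obj X) l)) := rfl
    dsimp only
    have e1 := ι_lamHom act h l X
    have n : (act.F g).map ((act.F h).map (biproduct.ι (fun k : G => (act.F k).obj X) l)) ≫
        (act.δ g h).hom.app (⨁ fun k : G => (act.F k).obj X) =
        (act.δ g h).hom.app ((act.F l).obj X) ≫
          (act.F (h * g)).map (biproduct.ι (fun k : G => (act.F k).obj X) l) :=
      (act.δ g h).hom.naturality _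
    have c := act.cocycle g h l X
    conv_lhs => rw [hl, ← Category.assoc, ← CategoryTheory.Functor.map_comp, e1,
      CategoryTheory.Functor.map_comp, Category.assoc, ι_lamHom act g (l * h) X]
    conv_rhs => rw [hl, ← Category.assoc, n, Category.assoc, ι_lamHom act (h * g) l X,
      ← Category.assoc, ← c]
    rw [ι_eq act (mul_assoc l h g)]
    simp
@[simp] lemma IndObj_obj (X : A) : (IndObj act X).obj = ⨁ fun k : G => (act.F k).obj X := rfl
@[simp] lemma IndObj_lam_hom (g : G) (X : A) :
    ((IndObj act X).lam g).hom = lamHom act g X := rfl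
@[simp] lemma IndObj_lam_inv (g : G) (X : A) :
    ((IndObj act X).lam g).inv = lamInv act g X := rfl

noncomputable def IndMap {X Y : A} (f : X ⟶ Y) : IndObj act X ⟶ IndObj act Y :=
  { f := biproduct.map fun g => (act.F g).map f
    comm := by
      intro h
      dsimp only [IndObj_lam_hom, IndObj_obj]
      apply additive_hom_ext (act.F h)
      intro l
      have hm : biproduct.ι (fun k : G => (act.F k).obj X) l ≫
          biproduct.map (fun g => (act.F g).map f) =
          (act.F l).map f ≫ biproduct.ι (fun k : G => (act.F k).obj Y) l :=
        biproduct.ι_map _ _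
      have n : (act.F h).map ((act.F l).map f) ≫ (act.δ h l).hom.app Y =
          (act.δ h l).hom.app X ≫ (act.F (l * h)).map f :=
        (act.δ h l).hom.naturality f
      have hm2 : biproduct.ι (fun k : G => (act.F k).obj X) (l * h) ≫
          biproduct.map (fun g => (act.F g).map f) =
          (act.F (l * h)).map f ≫ biproduct.ι (fun k : G => (act.F k).obj Y) (l * h) :=
        biproduct.ι_map _ _
      conv_lhs => rw [← Category.assoc, ← CategoryTheory.Functor.map_comp, hm,
        CategoryTheory.Functor.map_comp, Category.assoc, ι_lamHom act h l Y,
        ← Category.assoc, n, Category.assoc]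
      conv_rhs => rw [← Category.assoc, ι_lamHom act h l X, Category.assoc, hm2] }

@[simp] lemma IndMap_f {X Y : A} (f : X ⟶ Y) :
    (IndMap act f).f = biproduct.map fun g => (act.F g).map f := rfl

noncomputable def Ind : A ⥤ EqObj act where
  obj X := IndObj act X
  map f := IndMap act f
  map_id X := by
    apply EqObj.hom_ext
    show biproduct.map (fun g => (act.F g).map (𝟙 X)) = 𝟙 _
    ext j
    simp [biproduct.ι_map]
  map_comp {X Y Z} f g := by
    apply EqObj.hom_ext
    show biproduct.map (fun k => (act.F k).map (f ≫ g)) = _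
    ext j
    simp [IndMap_f, biproduct.ι_map, biproduct.ι_map_assoc, biproduct.ι_π, dite_comp, comp_dite,
      CategoryTheory.Functor.map_comp, biproduct.map_π]

@[simp] lemma Ind_map_f {X Y : A} (f : X ⟶ Y) :
    (EqObj.forget act).map ((Ind act).map f) = biproduct.map fun g => (act.F g).map f := rfl
noncomputable def unitA (X : A) : X ⟶ ⨁ fun k : G => (act.F k).obj X :=
  (uIso act X).inv ≫ biproduct.ι (fun k : G => (act.F k).obj X) 1

noncomputable def counitA (X : A) : (⨁ fun k : G => (act.F k).obj X) ⟶ X :=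
  biproduct.π (fun k : G => (act.F k).obj X) 1 ≫ (uIso act X).hom

lemma unitA_natural {X Y : A} (f : X ⟶ Y) :
    f ≫ unitA act Y = unitA act X ≫ biproduct.map fun g => (act.F g).map f := by
  unfold unitA
  have h : (uIso act X).inv ≫ (act.F (1 : G)).map f = f ≫ (uIso act Y).inv := by
    rw [Iso.inv_comp_eq, ← Category.assoc, ← uIso_natural act f, Category.assoc,
      Iso.hom_inv_id, Category.comp_id]
  rw [Category.assoc, biproduct.ι_map]
  simp only [← Category.assoc, h]

lemma counitA_natural {X Y : A} (f : X ⟶ Y) :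
    (biproduct.map fun g => (act.F g).map f) ≫ counitA act Y = counitA act X ≫ f := by
  unfold counitA
  rw [← Category.assoc, biproduct.map_π, Category.assoc, uIso_natural act f, ← Category.assoc]

lemma unitA_counitA (X : A) : unitA act X ≫ counitA act X = 𝟙 X := by
  unfold unitA counitA
  rw [Category.assoc, ← Category.assoc (biproduct.ι _ 1), biproduct.ι_π_self]
  simp

lemma compat_inv (Y : EqObj act) (h l : G) :
    (act.F h).map (Y.lam l).inv ≫ (act.δ h l).hom.app Y.obj =
      (Y.lam h).hom ≫ (Y.lam (l * h)).inv := by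
  rw [← cancel_mono ((Y.lam (l * h)).hom), Category.assoc, Category.assoc, ← Y.compat h l,
    ← Category.assoc, ← CategoryTheory.Functor.map_comp]
  simp

lemma comm_inv {X Y : EqObj act} (φ : X ⟶ Y) (g : G) :
    (X.lam g).inv ≫ (act.F g).map φ.f = φ.f ≫ (Y.lam g).inv := by
  rw [Iso.inv_comp_eq, ← Category.assoc, ← φ.comm g, Category.assoc]
  simp

noncomputable def counitE (Y : EqObj act) : IndObj act Y.obj ⟶ Y :=
  { f := biproduct.desc fun g => (Y.lam g).hom
    comm := by
      intro h
      dsimp only [IndObj_lam_hom, IndObj_obj]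
      apply additive_hom_ext (act.F h)
      intro l
      conv_lhs => rw [← Category.assoc, ← CategoryTheory.Functor.map_comp, biproduct.ι_desc,
        Y.compat h l]
      conv_rhs => rw [← Category.assoc, ι_lamHom act h l Y.obj, Category.assoc,
        biproduct.ι_desc] }

noncomputable def unitE (Y : EqObj act) : Y ⟶ IndObj act Y.obj :=
  { f := biproduct.lift fun g => (Y.lam g).inv
    comm := by
      intro h
      dsimp only [IndObj_lam_hom, IndObj_obj]
      apply biproduct.hom_ext
      intro j
      obtain ⟨l, rfl⟩ : ∃ l : G, j = l * h := ⟨j * h⁻¹, by group⟩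
      rw [Category.assoc, Category.assoc, lamHom_π act h l Y.obj, biproduct.lift_π,
        ← Category.assoc, ← CategoryTheory.Functor.map_comp, biproduct.lift_π,
        compat_inv act Y h l] }

noncomputable def adjA : Ind act ⊣ EqObj.forget act where
  unit :=
    { app := fun X => unitA act X
      naturality := fun X Y f => by
        dsimp only [Functor.comp_map, Functor.id_map, EqObj.forget_map]
        erw [unitA_natural act f]; rfl }
  counit :=
    { app := fun Y => counitE act Y
      naturality := fun Y Y' φ => by
        apply EqObj.hom_ext
        dsimp only [EqObj.comp_f, Functor.comp_map, Functor.id_map]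
        show (IndMap act φ.f).f ≫ (counitE act Y').f = (counitE act Y).f ≫ φ.f
        dsimp only [IndMap_f, counitE]
        apply biproduct.hom_ext'
        intro g
        erw [← Category.assoc, biproduct.ι_map, Category.assoc, biproduct.ι_desc,
          ← Category.assoc, biproduct.ι_desc, φ.comm g] }
  left_triangle_components X := by
    apply EqObj.hom_ext
    show (IndMap act (unitA act X)).f ≫ (counitE act (IndObj act X)).f = 𝟙 _
    dsimp only [IndMap_f, counitE]
    apply biproduct.hom_ext'
    intro j
    erw [← Category.assoc, biproduct.ι_map, Category.assoc, biproduct.ι_desc]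
    dsimp only [IndObj_lam_hom]
    unfold unitA
    erw [CategoryTheory.Functor.map_comp, Category.assoc, ι_lamHom act j 1 X, δ_one act j X,
      ← Category.assoc, ← Category.assoc, ← CategoryTheory.Functor.map_comp]
    simp [← ι_eq act (one_mul j).symm]
  right_triangle_components Y := by
    show unitA act Y.obj ≫ (counitE act Y).f = 𝟙 Y.obj
    dsimp only [counitE]
    unfold unitA
    rw [Category.assoc, biproduct.ι_desc, lam_one act Y, Iso.inv_hom_id]

noncomputable def adjB : EqObj.forget act ⊣ Ind act where
  unit :=
    { app := fun Y => unitE act Y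
      naturality := fun Y Y' φ => by
        apply EqObj.hom_ext
        show φ.f ≫ (unitE act Y').f = (unitE act Y).f ≫ (IndMap act φ.f).f
        dsimp only [IndMap_f, unitE]
        apply biproduct.hom_ext
        intro g
        erw [Category.assoc, biproduct.lift_π, Category.assoc, biproduct.map_π,
          ← Category.assoc, biproduct.lift_π, comm_inv act φ g] }
  counit :=
    { app := fun X => counitA act X
      naturality := fun X Y f => by
        dsimp only [Functor.comp_map, Functor.id_map]
        show (IndMap act f).f ≫ counitA act Y = counitA act X ≫ f
        erw [IndMap_f, counitA_natural act f] }
  left_triangle_components Y := by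
    show (unitE act Y).f ≫ counitA act Y.obj = 𝟙 Y.obj
    dsimp only [unitE]
    unfold counitA
    erw [← Category.assoc, biproduct.lift_π, ← lam_one act Y, Iso.inv_hom_id]
  right_triangle_components X := by
    apply EqObj.hom_ext
    show (unitE act (IndObj act X)).f ≫ (IndMap act (counitA act X)).f = 𝟙 _
    dsimp only [IndMap_f, unitE, IndObj_lam_inv, IndObj_obj]
    apply biproduct.hom_ext
    intro k
    have hinv : (act.δ k 1).inv.app X ≫ (act.F k).map (uIso act X).hom =
        eqToHom (objeq act (one_mul k) X) := by
      rw [← cancel_epi ((act.δ k 1).hom.app X), Iso.hom_inv_id_app_assoc, δ_one act k X]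
      simp
    erw [Category.assoc, biproduct.map_π, ← Category.assoc, biproduct.lift_π]
    unfold counitA
    rw [CategoryTheory.Functor.map_comp, ← Category.assoc, lamInv_mapπ act k 1 X,
      Category.assoc, hinv, ← π_eq act (one_mul k).symm]
    simp
lemma ind_separable : (Ind act).Separable := by
  refine ⟨fun X Y φ => unitA act X ≫ (EqObj.forget act).map φ ≫ counitA act Y, ?_, ?_⟩
  · intro X Y f
    show unitA act X ≫ (IndMap act f).f ≫ counitA act Y = f
    erw [IndMap_f, counitA_natural act f, ← Category.assoc, unitA_counitA, Category.id_comp]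
  · intro X' X Y Y' u v h
    show unitA act X' ≫ ((IndMap act u).f ≫ (EqObj.forget act).map h ≫ (IndMap act v).f) ≫
        counitA act Y' = u ≫ (unitA act X ≫ (EqObj.forget act).map h ≫ counitA act Y) ≫ v
    rw [IndMap_f, IndMap_f]
    simp only [Category.assoc]
    erw [Category.assoc (biproduct.map fun g => (act.F g).map u),
      Category.assoc ((EqObj.forget act).map h) (biproduct.map fun g => (act.F g).map v)]
    erw [← Category.assoc, ← unitA_natural act u, counitA_natural act v]
    erw [Category.assoc u, Category.assoc ((EqObj.forget act).map h) (counitA act Y) v]; rfl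

def avg (X Y : EqObj act) (h : X.obj ⟶ Y.obj) : X.obj ⟶ Y.obj :=
  ∑ g : G, (X.lam g).inv ≫ (act.F g).map h ≫ (Y.lam g).hom

lemma avg_key (X Y : EqObj act) (h : X.obj ⟶ Y.obj) (k : G) :
    (act.F k).map (avg act X Y h) ≫ (Y.lam k).hom = (X.lam k).hom ≫ avg act X Y h := by
  unfold avg
  rw [CategoryTheory.Functor.map_sum, Preadditive.sum_comp, Preadditive.comp_sum]
  refine (Fintype.sum_equiv (Equiv.mulRight k) _ _ ?_)
  intro g
  show (act.F k).map ((X.lam g).inv ≫ (act.F g).map h ≫ (Y.lam g).hom) ≫ (Y.lam k).hom =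
    (X.lam k).hom ≫ (X.lam (g * k)).inv ≫ (act.F (g * k)).map h ≫ (Y.lam (g * k)).hom
  rw [CategoryTheory.Functor.map_comp, CategoryTheory.Functor.map_comp]
  have hY : (act.F k).map (Y.lam g).hom ≫ (Y.lam k).hom =
      (act.δ k g).hom.app Y.obj ≫ (Y.lam (g * k)).hom := Y.compat k g
  have n : (act.F k).map ((act.F g).map h) ≫ (act.δ k g).hom.app Y.obj =
      (act.δ k g).hom.app X.obj ≫ (act.F (g * k)).map h := (act.δ k g).hom.naturality h
  rw [Category.assoc, Category.assoc, hY, ← Category.assoc ((act.F k).map ((act.F g).map h)), n,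
    ← Category.assoc, ← Category.assoc, compat_inv act X k g]
  simp only [Category.assoc]

lemma forget_separable (hG : NatInvertibleIn (Fintype.card G) A) :
    (EqObj.forget act).Separable := by
  classical
  have inj : ∀ {X Y : A} (a b : X ⟶ Y), Fintype.card G • a = Fintype.card G • b → a = b := by
    intro X Y a b hab
    obtain ⟨c, hc, hu⟩ := hG (Fintype.card G • b)
    rw [hu a hab, hu b rfl]
  choose div hdiv _ using fun (X Y : A) (f : X ⟶ Y) => hG f
  have hdivc : ∀ {X Y : A} (f : X ⟶ Y), Fintype.card G • div X Y f = f := fun f => hdiv _ _ _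
  refine ⟨fun X Y h => ⟨div X.obj Y.obj (avg act X Y h), ?_⟩, ?_, ?_⟩
  · intro k
    apply inj
    rw [← Preadditive.nsmul_comp, ← CategoryTheory.Functor.map_nsmul, hdivc,
      ← Preadditive.comp_nsmul, hdivc, avg_key act X Y h k]
  · intro X Y f
    apply EqObj.hom_ext
    show div X.obj Y.obj (avg act X Y ((EqObj.forget act).map f)) = f.f
    change div X.obj Y.obj (avg act X Y f.f) = f.f
    apply inj
    rw [hdivc]
    unfold avg
    have : ∀ g : G, (X.lam g).inv ≫ (act.F g).map f.f ≫ (Y.lam g).hom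
        = f.f := by
      intro g
      rw [f.comm g, ← Category.assoc, Iso.inv_hom_id, Category.id_comp]
    rw [Finset.sum_congr rfl fun g _ => this g, Finset.sum_const, Finset.card_univ]
  · intro X' X Y Y' u v h
    apply EqObj.hom_ext
    show div X'.obj Y'.obj (avg act X' Y' ((EqObj.forget act).map u ≫ h ≫
      (EqObj.forget act).map v)) = u.f ≫ div X.obj Y.obj (avg act X Y h) ≫ v.f
    apply inj
    rw [hdivc, ← Preadditive.comp_nsmul, ← Preadditive.nsmul_comp, hdivc]
    change avg act X' Y' (u.f ≫ h ≫ v.f) = _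
    unfold avg
    rw [Preadditive.sum_comp, Preadditive.comp_sum]
    refine Finset.sum_congr rfl fun g _ => ?_
    show (X'.lam g).inv ≫ (act.F g).map (u.f ≫ h ≫ v.f) ≫ (Y'.lam g).hom =
      u.f ≫ ((X.lam g).inv ≫ (act.F g).map h ≫ (Y.lam g).hom) ≫ v.f
    erw [CategoryTheory.Functor.map_comp, CategoryTheory.Functor.map_comp]
    simp only [Category.assoc]
    erw [← Category.assoc, comm_inv act u g, Category.assoc, v.comm g]
    erw [Category.assoc ((act.F g).map h) (Y.lam g).hom v.f]; rfl

end IndAux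

/-- The induction functor `Ind : A → A^G` is separable; if `|G|` is invertible in `A`,
then the forgetful functor `ω : A^G → A` is separable. -/
theorem induction_and_forget_separable
    [Preadditive A] [HasFiniteBiproducts A] [Fintype G] (act : GAction G A)
    [∀ g : G, (act.F g).Additive] :
    (∃ (Ind : A ⥤ EqObj act) (_ : IsInduction act Ind)
        (adj₁ : Ind ⊣ EqObj.forget act) (adj₂ : EqObj.forget act ⊣ Ind),
        (∀ X : A, adj₁.unit.app X ≫ adj₂.counit.app X = 𝟙 X) ∧
        Ind.Separable) ∧
    (NatInvertibleIn (Fintype.card G) A → (EqObj.forget act).Separable) := by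
  constructor
  · refine ⟨IndAux.Ind act, ⟨fun X => Iso.refl _, fun X Y f => ?_⟩,
      IndAux.adjA act, IndAux.adjB act, fun X => IndAux.unitA_counitA act X,
      IndAux.ind_separable act⟩
    show (IndAux.IndMap act f).f ≫ 𝟙 _ = 𝟙 _ ≫ biproduct.map fun g => (act.F g).map f
    erw [IndAux.IndMap_f, Category.comp_id, Category.id_comp]
  · exact fun hG => IndAux.forget_separable act hG
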